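/- Let K be a field, A a subring of K, and Σ an infinite, locally finite subset of Zar(K|A). Then the constructible closure of Σ in Zar(K|A) equals Σ ∪ {K}. -/

import Mathlib

/-- The Zariski topology on the space of valuation subrings of a field `K`: it is generated
by the basic open sets `B_F = {V | F ⊆ V}`, for `F` a finite subset of `K`. -/
def zarTop (K : Type*) [Field K] : TopologicalSpace (ValuationSubring K) :=
  TopologicalSpace.generateFrom
    {S : Set (ValuationSubring K) |
      ∃ F : Finset K, S = {V : ValuationSubring K | ∀ x ∈ F, x ∈ V}}

/-- The constructible (patch) topology on a topological space `X`: the topology generated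
by the quasi-compact open sets together with their complements. -/
def constructibleTop (X : Type*) [TopologicalSpace X] : TopologicalSpace X :=
  TopologicalSpace.generateFrom
    ({U : Set X | IsOpen U ∧ IsCompact U} ∪ (compl '' {U : Set X | IsOpen U ∧ IsCompact U}))

open TopologicalSpace Filter Set Topology


section Aux

variable {K : Type*} [Field K]

local instance zarInst : TopologicalSpace (ValuationSubring K) := zarTop K

/-- limit valuation subring of an ultrafilter on a set of valuation subrings -/
def limV (A : Subring K) (𝒰 : Ultrafilter {V : ValuationSubring K // (A : Set K) ⊆ ↑V}) :
    ValuationSubring K where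
  carrier := {x : K | {V : {V : ValuationSubring K // (A : Set K) ⊆ ↑V} |
    x ∈ (V : ValuationSubring K)} ∈ 𝒰}
  one_mem' := by
    have : {V : {V : ValuationSubring K // (A : Set K) ⊆ ↑V} |
        (1:K) ∈ (V : ValuationSubring K)} = Set.univ := by
      ext V; simp [one_mem]
    simp only [Set.mem_setOf_eq, this]; exact Filter.univ_mem
  zero_mem' := by
    have : {V : {V : ValuationSubring K // (A : Set K) ⊆ ↑V} |
        (0:K) ∈ (V : ValuationSubring K)} = Set.univ := by
      ext V; simp [zero_mem]
    simp only [Set.mem_setOf_eq, this]; exact Filter.univ_mem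
  mul_mem' := fun ha hb => by
    refine Filter.mem_of_superset (Filter.inter_mem ha hb) fun V hV => ?_
    simp only [Set.mem_setOf_eq, Set.mem_inter_iff] at hV ⊢
    exact mul_mem hV.1 hV.2
  add_mem' := fun ha hb => by
    refine Filter.mem_of_superset (Filter.inter_mem ha hb) fun V hV => ?_
    simp only [Set.mem_setOf_eq, Set.mem_inter_iff] at hV ⊢
    exact add_mem hV.1 hV.2
  neg_mem' := fun ha => by
    refine Filter.mem_of_superset ha fun V hV => ?_
    simp only [Set.mem_setOf_eq] at hV ⊢
    exact neg_mem hV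
  mem_or_inv_mem' := fun x => by
    rcases Ultrafilter.mem_or_compl_mem 𝒰 {V : {V : ValuationSubring K // (A : Set K) ⊆ ↑V} |
      x ∈ (V : ValuationSubring K)} with h | h
    · exact Or.inl h
    · refine Or.inr (Filter.mem_of_superset h fun V hV => ?_)
      exact ((V : ValuationSubring K).mem_or_inv_mem x).resolve_left hV

theorem mem_limV {A : Subring K}
    {𝒰 : Ultrafilter {V : ValuationSubring K // (A : Set K) ⊆ ↑V}} {x : K} :
    x ∈ limV A 𝒰 ↔ {V : {V : ValuationSubring K // (A : Set K) ⊆ ↑V} |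
      x ∈ (V : ValuationSubring K)} ∈ 𝒰 := Iff.rfl

theorem sub_limV (A : Subring K) (𝒰 : Ultrafilter {V : ValuationSubring K // (A : Set K) ⊆ ↑V}) :
    (A : Set K) ⊆ ↑(limV A 𝒰) := by
  intro a ha
  rw [SetLike.mem_coe, mem_limV]
  have : {V : {V : ValuationSubring K // (A : Set K) ⊆ ↑V} |
      a ∈ (V : ValuationSubring K)} = Set.univ := by
    ext V; simpa using V.2 ha
  rw [this]; exact Filter.univ_mem

theorem isOpen_BF (A : Subring K) (F : Finset K) :
    IsOpen {V : {V : ValuationSubring K // (A : Set K) ⊆ ↑V} |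
      ∀ x ∈ F, x ∈ (V : ValuationSubring K)} := by
  have h : IsOpen {V : ValuationSubring K | ∀ x ∈ F, x ∈ V} :=
    TopologicalSpace.GenerateOpen.basic _ ⟨F, rfl⟩
  exact h.preimage continuous_subtype_val

theorem isCompact_BF (A : Subring K) (F : Finset K) :
    IsCompact {V : {V : ValuationSubring K // (A : Set K) ⊆ ↑V} |
      ∀ x ∈ F, x ∈ (V : ValuationSubring K)} := by
  rw [isCompact_iff_ultrafilter_le_nhds]
  intro 𝒰 h𝒰
  rw [Filter.le_principal_iff] at h𝒰
  refine ⟨⟨limV A 𝒰, sub_limV A 𝒰⟩, ?_, ?_⟩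
  · intro x hx
    show x ∈ limV A 𝒰
    rw [mem_limV]
    exact Filter.mem_of_superset h𝒰 fun V hV => hV x hx
  · rw [show 𝓝 (⟨limV A 𝒰, sub_limV A 𝒰⟩ : {V : ValuationSubring K // (A : Set K) ⊆ ↑V}) =
        Filter.comap Subtype.val (𝓝 (limV A 𝒰)) from nhds_induced Subtype.val _]
    rw [← Filter.map_le_iff_le_comap]
    refine le_trans ?_ (le_of_eq nhds_generateFrom.symm)
    refine le_iInf₂ fun s hs => Filter.le_principal_iff.2 ?_
    obtain ⟨hmem, G, rfl⟩ := hs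
    rw [Filter.mem_map]
    refine Filter.mem_of_superset
      ((Filter.biInter_finset_mem G).2 fun x hx => mem_limV.1 (hmem x hx)) ?_
    intro V hV
    simp only [Set.mem_iInter, Set.mem_setOf_eq] at hV
    intro x hx
    exact hV x hx

end Aux


section Part2
variable {K : Type*} [Field K]

/-- Every generated-open set of the Zariski topology containing a point contains a basic set. -/
theorem exists_BF_subset : ∀ {U : Set (ValuationSubring K)},
    TopologicalSpace.GenerateOpen
      {S : Set (ValuationSubring K) |
        ∃ F : Finset K, S = {V : ValuationSubring K | ∀ x ∈ F, x ∈ V}} U →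
    ∀ {V : ValuationSubring K}, V ∈ U →
    ∃ F : Finset K, (∀ x ∈ F, x ∈ V) ∧
      {W : ValuationSubring K | ∀ x ∈ F, x ∈ W} ⊆ U := by
  classical
  intro U hU
  induction hU with
  | basic s hs =>
    intro V hV
    obtain ⟨F, rfl⟩ := hs
    exact ⟨F, hV, fun W hW => hW⟩
  | univ =>
    intro V _
    exact ⟨∅, by simp, fun _ _ => trivial⟩
  | inter s t _ _ ihs iht =>
    intro V hV
    obtain ⟨F₁, h1, h1'⟩ := ihs hV.1
    obtain ⟨F₂, h2, h2'⟩ := iht hV.2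
    refine ⟨F₁ ∪ F₂, ?_, ?_⟩
    · intro x hx
      rcases Finset.mem_union.1 hx with h | h
      · exact h1 x h
      · exact h2 x h
    · intro W hW
      exact ⟨h1' fun x hx => hW x (Finset.mem_union_left _ hx),
        h2' fun x hx => hW x (Finset.mem_union_right _ hx)⟩
  | sUnion T _ ih =>
    rintro V ⟨s, hsT, hVs⟩
    obtain ⟨F, hF, hF'⟩ := ih s hsT hVs
    exact ⟨F, hF, fun W hW => ⟨s, hsT, hF' hW⟩⟩

/-- locally finite implies cofinitely many members contain any finite set -/
theorem cofinite_BF (A : Subring K)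
    (S : Set {V : ValuationSubring K // (A : Set K) ⊆ ↑V})
    (hlf : ∀ x : K, x ≠ 0 →
      {V ∈ S | ¬ (x ∈ (V : ValuationSubring K) ∧ x⁻¹ ∈ (V : ValuationSubring K))}.Finite)
    (F : Finset K) :
    (S \ {V : {V : ValuationSubring K // (A : Set K) ⊆ ↑V} |
      ∀ x ∈ F, x ∈ (V : ValuationSubring K)}).Finite := by
  have hfin : ∀ x : K,
      {V ∈ S | ¬ (x ∈ (V : ValuationSubring K) ∧ x⁻¹ ∈ (V : ValuationSubring K))}.Finite := by
    intro x
    by_cases hx : x = 0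
    · subst hx
      convert Set.finite_empty
      ext V
      simp [zero_mem]
    · exact hlf x hx
  refine Set.Finite.subset ((F : Set K).toFinite.biUnion fun x _ => hfin x) ?_
  rintro V ⟨hVS, hV⟩
  simp only [Set.mem_setOf_eq] at hV
  push_neg at hV
  obtain ⟨x, hxF, hxV⟩ := hV
  exact Set.mem_biUnion hxF ⟨hVS, fun h => hxV h.1⟩

theorem mem_closure_generateFrom_of_filter {α : Type*} {g : Set (Set α)} {S : Set α} {a : α}
    (f : Filter α) (hne : f.NeBot) (hS : S ∈ f) (h : ∀ u ∈ g, a ∈ u → u ∈ f) :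
    a ∈ @closure _ (TopologicalSpace.generateFrom g) S := by
  letI := TopologicalSpace.generateFrom g
  rw [mem_closure_iff_clusterPt]
  have hf : f ≤ 𝓝 a := by
    refine le_trans ?_ (le_of_eq nhds_generateFrom.symm)
    exact le_iInf₂ fun s hs => Filter.le_principal_iff.2 (h s hs.2 hs.1)
  exact Filter.neBot_of_le (le_inf hf (Filter.le_principal_iff.2 hS))

theorem subset_closure_generateFrom {α : Type*} {g : Set (Set α)} {S : Set α} :
    S ⊆ @closure _ (TopologicalSpace.generateFrom g) S := by
  letI := TopologicalSpace.generateFrom g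
  exact subset_closure

theorem not_mem_closure_generateFrom {α : Type*} {g : Set (Set α)} {S : Set α} {a : α}
    {O : Set α} (hO : TopologicalSpace.GenerateOpen g O) (ha : a ∈ O) (hd : O ∩ S = ∅) :
    a ∉ @closure _ (TopologicalSpace.generateFrom g) S := by
  letI := TopologicalSpace.generateFrom g
  intro h
  rcases mem_closure_iff.1 h O hO ha with ⟨x, hxO, hxS⟩
  rw [Set.eq_empty_iff_forall_notMem] at hd
  exact hd x ⟨hxO, hxS⟩

theorem generateOpen_biInter_finset {α β : Type*} {g : Set (Set α)} (s : Finset β)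
    (f : β → Set α) (h : ∀ b ∈ s, TopologicalSpace.GenerateOpen g (f b)) :
    TopologicalSpace.GenerateOpen g (⋂ b ∈ s, f b) := by
  classical
  induction s using Finset.induction_on with
  | empty => simpa using TopologicalSpace.GenerateOpen.univ
  | @insert b t hb ih =>
    rw [Finset.set_biInter_insert]
    exact TopologicalSpace.GenerateOpen.inter _ _ (h b (Finset.mem_insert_self b t))
      (ih fun c hc => h c (Finset.mem_insert_of_mem hc))

end Part2


section Main

variable {K : Type*} [Field K]

attribute [local instance] zarInst

theorem main_aux (A : Subring K)
    (S : Set {V : ValuationSubring K // (A : Set K) ⊆ ↑V}) (hinf : S.Infinite)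
    (hlf : ∀ x : K, x ≠ 0 →
      {V ∈ S | ¬ (x ∈ (V : ValuationSubring K) ∧ x⁻¹ ∈ (V : ValuationSubring K))}.Finite) :
    @closure _ (constructibleTop {V : ValuationSubring K // (A : Set K) ⊆ ↑V}) S =
      S ∪ {⟨(⊤ : ValuationSubring K), fun x _ => Set.mem_univ x⟩} := by
  classical
  set G : Set (Set {V : ValuationSubring K // (A : Set K) ⊆ ↑V}) :=
    ({U | IsOpen U ∧ IsCompact U} ∪ (compl '' {U | IsOpen U ∧ IsCompact U})) with hG
  have hct : constructibleTop {V : ValuationSubring K // (A : Set K) ⊆ ↑V} =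
      TopologicalSpace.generateFrom G := rfl
  rw [hct]
  -- the trivial valuation as a point of the space
  set T0 : {V : ValuationSubring K // (A : Set K) ⊆ ↑V} :=
    ⟨(⊤ : ValuationSubring K), fun x _ => Set.mem_univ x⟩ with hT0
  -- basic compact open sets
  set Bx : K → Set {V : ValuationSubring K // (A : Set K) ⊆ ↑V} :=
    fun x => {V | x ∈ (V : ValuationSubring K)} with hBx
  have hBo : ∀ x : K, IsOpen (Bx x) := by
    intro x
    have := isOpen_BF A {x}
    simpa using this
  have hBc : ∀ x : K, IsCompact (Bx x) := by
    intro x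
    have := isCompact_BF A {x}
    simpa using this
  refine Set.Subset.antisymm ?_ ?_
  · -- closure ⊆ S ∪ {T0}
    intro W hW
    by_contra hn
    simp only [Set.mem_union, Set.mem_singleton_iff] at hn
    push_neg at hn
    obtain ⟨hWS, hWT⟩ := hn
    have hWne : (W : ValuationSubring K) ≠ ⊤ := fun h => hWT (Subtype.ext h)
    obtain ⟨t, ht⟩ : ∃ t : K, t ∉ (W : ValuationSubring K) := by
      by_contra hc
      push_neg at hc
      exact hWne (SetLike.ext fun x => ⟨fun _ => ValuationSubring.mem_top x, fun _ => hc x⟩)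
    have ht0 : t ≠ 0 := fun h => ht (h ▸ zero_mem _)
    have hTfin := hlf t ht0
    set TF := hTfin.toFinset with hTF
    have hsep : ∀ V : {V : ValuationSubring K // (A : Set K) ⊆ ↑V}, V ∈ TF →
        ∃ O : Set {V : ValuationSubring K // (A : Set K) ⊆ ↑V},
          TopologicalSpace.GenerateOpen G O ∧ W ∈ O ∧ V ∉ O := by
      intro V hV
      have hVS : V ∈ S := (hTfin.mem_toFinset.1 hV).1
      have hne : (V : ValuationSubring K) ≠ (W : ValuationSubring K) := by
        intro h
        exact hWS (Subtype.ext h ▸ hVS)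
      have hx : ∃ x : K,
          (x ∈ (V : ValuationSubring K) ∧ x ∉ (W : ValuationSubring K)) ∨
          (x ∈ (W : ValuationSubring K) ∧ x ∉ (V : ValuationSubring K)) := by
        by_contra hc
        push_neg at hc
        have hiff : ∀ x : K, x ∈ (V : ValuationSubring K) ↔ x ∈ (W : ValuationSubring K) :=
          fun x => ⟨(hc x).1, (hc x).2⟩
        exact hne (SetLike.ext hiff)
      obtain ⟨x, hx⟩ := hx
      rcases hx with ⟨hxV, hxW⟩ | ⟨hxW, hxV⟩
      · exact ⟨(Bx x)ᶜ, .basic _ (Or.inr ⟨Bx x, ⟨hBo x, hBc x⟩, rfl⟩), hxW, fun h => h hxV⟩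
      · exact ⟨Bx x, .basic _ (Or.inl ⟨hBo x, hBc x⟩), hxW, hxV⟩
    choose f hfo hfW hfV using hsep
    set f' : {V : ValuationSubring K // (A : Set K) ⊆ ↑V} →
        Set {V : ValuationSubring K // (A : Set K) ⊆ ↑V} :=
      fun V => if h : V ∈ TF then f V h else Set.univ with hf'
    set O : Set {V : ValuationSubring K // (A : Set K) ⊆ ↑V} :=
      (Bx t)ᶜ ∩ ⋂ V ∈ TF, f' V with hO
    have hOopen : TopologicalSpace.GenerateOpen G O := by
      refine .inter _ _ (.basic _ (Or.inr ⟨Bx t, ⟨hBo t, hBc t⟩, rfl⟩)) ?_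
      refine generateOpen_biInter_finset TF f' fun V hV => ?_
      rw [hf']
      simp only [dif_pos hV]
      exact hfo V hV
    have hWO : W ∈ O := by
      refine ⟨ht, ?_⟩
      refine Set.mem_iInter₂.2 fun V hV => ?_
      rw [hf']
      simp only [dif_pos hV]
      exact hfW V hV
    have hdisj : O ∩ S = ∅ := by
      rw [Set.eq_empty_iff_forall_notMem]
      rintro V ⟨⟨hVt, hVi⟩, hVS⟩
      have hVT : V ∈ TF := hTfin.mem_toFinset.2 ⟨hVS, fun h => hVt h.1⟩
      have hmem := Set.mem_iInter₂.1 hVi V hVT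
      rw [hf'] at hmem
      simp only [dif_pos hVT] at hmem
      exact hfV V hVT hmem
    exact absurd hW (not_mem_closure_generateFrom hOopen hWO hdisj)
  · -- S ∪ {T0} ⊆ closure
    rintro V (hV | hV)
    · exact subset_closure_generateFrom hV
    · rw [Set.mem_singleton_iff] at hV
      subst hV
      refine mem_closure_generateFrom_of_filter (Filter.cofinite ⊓ 𝓟 S) ?_ ?_ ?_
      · rw [Filter.inf_principal_neBot_iff]
        intro U hU
        rw [Filter.mem_cofinite] at hU
        by_contra hc
        rw [Set.not_nonempty_iff_eq_empty] at hc
        refine hinf (hU.subset fun x hx => ?_)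
        intro hxU
        rw [Set.eq_empty_iff_forall_notMem] at hc
        exact hc x ⟨hxU, hx⟩
      · exact Filter.mem_inf_of_right (Filter.mem_principal_self S)
      · rintro u (⟨huo, huc⟩ | ⟨C, ⟨hCo, hCc⟩, rfl⟩) hmem
        · -- compact open containing the trivial valuation
          obtain ⟨U, hUo, rfl⟩ := isOpen_induced_iff.1 huo
          obtain ⟨F, -, hFU⟩ := exists_BF_subset hUo hmem
          have hfin := cofinite_BF A S hlf F
          have h1 : (S \ {V : {V : ValuationSubring K // (A : Set K) ⊆ ↑V} |
              ∀ x ∈ F, x ∈ (V : ValuationSubring K)})ᶜ ∈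
              (Filter.cofinite : Filter {V : ValuationSubring K // (A : Set K) ⊆ ↑V}) := by
            rw [Filter.mem_cofinite, compl_compl]
            exact hfin
          refine Filter.mem_of_superset
            (Filter.inter_mem_inf h1 (Filter.mem_principal_self S)) ?_
          rintro V ⟨hV1, hV2⟩
          have hVP : ∀ x ∈ F, x ∈ (V : ValuationSubring K) := by
            by_contra h
            exact hV1 ⟨hV2, h⟩
          exact hFU hVP
        · -- complement of a compact open not containing the trivial valuation
          have hCe : C = ∅ := by
            by_contra hc
            obtain ⟨V, hVC⟩ := Set.nonempty_iff_ne_empty.2 hc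
            obtain ⟨U, hUo, rfl⟩ := isOpen_induced_iff.1 hCo
            obtain ⟨F, -, hFU⟩ := exists_BF_subset hUo hVC
            exact hmem (hFU fun x _ => ValuationSubring.mem_top x)
          rw [hCe, Set.compl_empty]
          exact Filter.univ_mem

end Main

/-- If `Σ` is an infinite, locally finite collection of valuation domains in `Zar(K|A)`
(each nonzero `x ∈ K` is a non-unit in only finitely many members of `Σ`), then the
closure of `Σ` in the constructible topology of `Zar(K|A)` is `Σ ∪ {K}`, where `K`
denotes the trivial valuation domain. -/
theorem locally_finite_cons_closure {K : Type*} [Field K] (A : Subring K)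
    (S : Set {V : ValuationSubring K // (A : Set K) ⊆ ↑V}) (hinf : S.Infinite)
    (hlf : ∀ x : K, x ≠ 0 →
      {V ∈ S | ¬ (x ∈ (V : ValuationSubring K) ∧ x⁻¹ ∈ (V : ValuationSubring K))}.Finite) :
    letI : TopologicalSpace (ValuationSubring K) := zarTop K
    @closure _ (constructibleTop {V : ValuationSubring K // (A : Set K) ⊆ ↑V}) S =
      S ∪ {⟨(⊤ : ValuationSubring K), fun x _ => Set.mem_univ x⟩} := by
  exact main_aux A S hinf hlf
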